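/- arXiv:1401.5011 — 2 statements merged into one kernel-verified Lean document; each statement's English description precedes it below -/
import Mathlib

section
/- Let K be a nondegenerate triangle in ℝ² with barycentric coordinates λ₁, λ₂, λ₃ and interior bubble function φ_K = 27 λ₁ λ₂ λ₃. Then there exists a constant C > 0 depending only on the minimal angle of K (in fact C may be taken independent of K for the L² equivalence on polynomials of fixed degree) such that for every polynomial v of degree at most m on K: C⁻¹ ∫_K v² dx ≤ ∫_K φ_K v² dx ≤ C ∫_K v² dx. -/
open MeasureTheory

lemma aux_one_var {n : ℕ} (a : Fin n → ℝ) {s₀ δ : ℝ} (hδ : 0 < δ)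
    (h : ∀ s ∈ Set.Ioo (s₀ - δ) (s₀ + δ), ∑ i : Fin n, a i * s ^ (i : ℕ) = 0) :
    ∀ i, a i = 0 := by
  set Q : Polynomial ℝ := ∑ i : Fin n, Polynomial.C (a i) * Polynomial.X ^ (i : ℕ) with hQ
  have hQ0 : Q = 0 := by
    apply Polynomial.eq_zero_of_infinite_isRoot
    apply Set.Infinite.mono (s := Set.Ioo (s₀ - δ) (s₀ + δ))
    · intro s hs
      simp only [Set.mem_setOf_eq, Polynomial.IsRoot, hQ, Polynomial.eval_finset_sum,
        Polynomial.eval_mul, Polynomial.eval_C, Polynomial.eval_pow, Polynomial.eval_X]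
      exact h s hs
    · exact Set.Ioo_infinite (by linarith)
  intro i
  have hc : Q.coeff (i : ℕ) = a i := by
    simp only [hQ, Polynomial.finset_sum_coeff, Polynomial.coeff_C_mul,
      Polynomial.coeff_X_pow]
    rw [Finset.sum_eq_single i (fun j _ hj => by
      rw [if_neg (fun hv => hj (Fin.val_injective hv).symm), mul_zero])
      (fun hi => absurd (Finset.mem_univ i) hi)]
    simp
  rw [hQ0] at hc
  simpa using hc.symm

lemma aux_two_var {n : ℕ} (c : Fin n × Fin n → ℝ) {s₀ t₀ δ : ℝ} (hδ : 0 < δ)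
    (h : ∀ s ∈ Set.Ioo (s₀ - δ) (s₀ + δ), ∀ t ∈ Set.Ioo (t₀ - δ) (t₀ + δ),
      ∑ ij : Fin n × Fin n, c ij * s ^ (ij.1 : ℕ) * t ^ (ij.2 : ℕ) = 0) :
    ∀ ij, c ij = 0 := by
  have key : ∀ t ∈ Set.Ioo (t₀ - δ) (t₀ + δ), ∀ i : Fin n,
      ∑ j : Fin n, c (i, j) * t ^ (j : ℕ) = 0 := by
    intro t ht
    apply aux_one_var (a := fun i => ∑ j : Fin n, c (i, j) * t ^ (j : ℕ)) hδ
    intro s hs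
    rw [← h s hs t ht, ← Finset.univ_product_univ, Finset.sum_product]
    exact Finset.sum_congr rfl fun i _ => by rw [Finset.sum_mul]; exact Finset.sum_congr rfl fun j _ => by ring
  intro ij
  exact aux_one_var (a := fun j => c (ij.1, j)) hδ (fun t ht => key t ht ij.1) ij.2


lemma aux_repr (m : ℕ) (p : MvPolynomial (Fin 2) ℝ) (hp : p.totalDegree ≤ m) (x : Fin 2 → ℝ) :
    MvPolynomial.eval x p =
      ∑ ij : Fin (m+1) × Fin (m+1),
        MvPolynomial.coeff (Finsupp.equivFunOnFinite.symm ![(ij.1 : ℕ), (ij.2 : ℕ)]) p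
          * x 0 ^ (ij.1 : ℕ) * x 1 ^ (ij.2 : ℕ) := by
  classical
  set e : Fin (m+1) × Fin (m+1) → (Fin 2 →₀ ℕ) :=
    fun ij => Finsupp.equivFunOnFinite.symm ![(ij.1 : ℕ), (ij.2 : ℕ)] with he
  have heval : ∀ ij : Fin (m+1) × Fin (m+1), (e ij) 0 = (ij.1 : ℕ) ∧ (e ij) 1 = (ij.2 : ℕ) := by
    intro ij; constructor <;> simp [he, Finsupp.equivFunOnFinite]
  have hinj : Function.Injective e := by
    intro a b hab
    have h0 : (e a) 0 = (e b) 0 := by rw [hab]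
    have h1 : (e a) 1 = (e b) 1 := by rw [hab]
    rw [(heval a).1, (heval b).1] at h0
    rw [(heval a).2, (heval b).2] at h1
    exact Prod.ext (Fin.val_injective h0) (Fin.val_injective h1)
  set f : (Fin 2 →₀ ℕ) → ℝ := fun d => MvPolynomial.coeff d p * x 0 ^ (d 0) * x 1 ^ (d 1) with hf
  have hrhs : ∑ ij : Fin (m+1) × Fin (m+1),
      MvPolynomial.coeff (e ij) p * x 0 ^ (ij.1 : ℕ) * x 1 ^ (ij.2 : ℕ)
      = ∑ d ∈ Finset.image e Finset.univ, f d := by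
    rw [Finset.sum_image (fun a _ b _ h => hinj h)]
    exact Finset.sum_congr rfl fun ij _ => by
      simp only [hf]; rw [(heval ij).1, (heval ij).2]
  have hsub : p.support ⊆ Finset.image e Finset.univ := by
    intro d hd
    have hdsum : d.sum (fun _ n => n) ≤ m := le_trans (MvPolynomial.le_totalDegree hd) hp
    have hsum2 : d.sum (fun _ n => n) = d 0 + d 1 := by
      rw [Finsupp.sum_fintype _ _ (fun _ => rfl), Fin.sum_univ_two]
    rw [hsum2] at hdsum
    have hd0 : d 0 ≤ m := by omega
    have hd1 : d 1 ≤ m := by omega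
    refine Finset.mem_image.2 ⟨(⟨d 0, Nat.lt_succ_of_le hd0⟩, ⟨d 1, Nat.lt_succ_of_le hd1⟩),
      Finset.mem_univ _, ?_⟩
    apply Finsupp.ext
    intro a
    fin_cases a
    · exact (heval _).1
    · exact (heval _).2
  have hlhs : MvPolynomial.eval x p = ∑ d ∈ p.support, f d := by
    rw [MvPolynomial.eval_eq']
    exact Finset.sum_congr rfl fun d _ => by
      simp only [hf]; rw [Fin.prod_univ_two, mul_assoc]
  rw [hlhs]
  exact (Finset.sum_subset hsub (fun d _ hd => by
    simp only [hf]; rw [MvPolynomial.notMem_support_iff.1 hd, zero_mul, zero_mul])).trans hrhs.symm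


lemma aux_core (K : Set (EuclideanSpace ℝ (Fin 2))) (hKc : IsCompact K)
    (hU : (interior K).Nonempty)
    (φ : EuclideanSpace ℝ (Fin 2) → ℝ) (hφc : Continuous φ)
    (hφ0 : ∀ x ∈ K, 0 ≤ φ x) (hφ27 : ∀ x ∈ K, φ x ≤ 27)
    (hφpos : ∀ x ∈ interior K, 0 < φ x) (m : ℕ) :
    ∃ C : ℝ, 0 < C ∧ ∀ c : Fin (m+1) × Fin (m+1) → ℝ,
      C⁻¹ * (∫ x in K, (∑ ij : Fin (m+1) × Fin (m+1), c ij * (x 0)^(ij.1 : ℕ) * (x 1)^(ij.2 : ℕ))^2) ≤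
        (∫ x in K, φ x * (∑ ij : Fin (m+1) × Fin (m+1), c ij * (x 0)^(ij.1 : ℕ) * (x 1)^(ij.2 : ℕ))^2) ∧
      (∫ x in K, φ x * (∑ ij : Fin (m+1) × Fin (m+1), c ij * (x 0)^(ij.1 : ℕ) * (x 1)^(ij.2 : ℕ))^2) ≤
        C * (∫ x in K, (∑ ij : Fin (m+1) × Fin (m+1), c ij * (x 0)^(ij.1 : ℕ) * (x 1)^(ij.2 : ℕ))^2) := by
  classical
  have hKm : MeasurableSet K := hKc.isClosed.measurableSet
  set b : Fin (m+1) × Fin (m+1) → EuclideanSpace ℝ (Fin 2) → ℝ :=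
    fun ij x => (x 0)^(ij.1 : ℕ) * (x 1)^(ij.2 : ℕ) with hbdef
  set F : (Fin (m+1) × Fin (m+1) → ℝ) → EuclideanSpace ℝ (Fin 2) → ℝ :=
    fun c x => ∑ ij : Fin (m+1) × Fin (m+1), c ij * (x 0)^(ij.1 : ℕ) * (x 1)^(ij.2 : ℕ) with hFdef
  have hFb : ∀ c x, F c x = ∑ ij : Fin (m+1) × Fin (m+1), c ij * b ij x := by
    intro c x
    rw [hFdef]
    exact Finset.sum_congr rfl fun ij _ => by rw [hbdef]; ring
  have hbc : ∀ ij, Continuous (b ij) := by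
    intro ij
    exact ((PiLp.continuous_apply (p := 2) (β := fun _ : Fin 2 => ℝ) (0 : Fin 2)).pow _).mul ((PiLp.continuous_apply (p := 2) (β := fun _ : Fin 2 => ℝ) (1 : Fin 2)).pow _)
  have hFc : ∀ c, Continuous (F c) := by
    intro c
    have : F c = fun x => ∑ ij : Fin (m+1) × Fin (m+1), c ij * b ij x := funext (hFb c)
    rw [this]
    exact continuous_finset_sum _ fun ij _ => continuous_const.mul (hbc ij)
  have hint : ∀ h : EuclideanSpace ℝ (Fin 2) → ℝ, Continuous h → IntegrableOn h K := by
    intro h hh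
    exact hh.continuousOn.integrableOn_compact hKc
  set g : (Fin (m+1) × Fin (m+1) → ℝ) → ℝ := fun c => ∫ x in K, (F c x)^2 with hgdef
  set f : (Fin (m+1) × Fin (m+1) → ℝ) → ℝ := fun c => ∫ x in K, φ x * (F c x)^2 with hfdef
  -- expansion of the square
  have hsq : ∀ c x, (F c x)^2 = ∑ ij : Fin (m+1) × Fin (m+1), ∑ kl : Fin (m+1) × Fin (m+1),
      (c ij * c kl) * (b ij x * b kl x) := by
    intro c x
    rw [sq, hFb, Finset.sum_mul_sum]
    exact Finset.sum_congr rfl fun ij _ => Finset.sum_congr rfl fun kl _ => by ring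
  -- continuity of g
  have hgcont : Continuous g := by
    have hgeq : g = fun c => ∑ ij : Fin (m+1) × Fin (m+1), ∑ kl : Fin (m+1) × Fin (m+1),
        (c ij * c kl) * ∫ x in K, b ij x * b kl x := by
      funext c
      rw [hgdef]
      simp only [hsq]
      rw [integral_finset_sum _ (fun ij _ => integrable_finset_sum _ (fun kl _ =>
        hint (fun x => c ij * c kl * (b ij x * b kl x)) ((continuous_const.mul ((hbc ij).mul (hbc kl)))) ))]
      refine Finset.sum_congr rfl fun ij _ => ?_
      rw [integral_finset_sum _ (fun kl _ =>
        hint (fun x => c ij * c kl * (b ij x * b kl x)) ((continuous_const.mul ((hbc ij).mul (hbc kl)))) )]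
      exact Finset.sum_congr rfl fun kl _ => integral_const_mul _ _
    rw [hgeq]
    exact continuous_finset_sum _ fun ij _ => continuous_finset_sum _ fun kl _ =>
      ((continuous_apply ij).mul (continuous_apply kl)).mul continuous_const
  -- continuity of f
  have hfcont : Continuous f := by
    have hsqφ : ∀ c x, φ x * (F c x)^2 = ∑ ij : Fin (m+1) × Fin (m+1),
        ∑ kl : Fin (m+1) × Fin (m+1), (c ij * c kl) * (φ x * (b ij x * b kl x)) := by
      intro c x
      rw [hsq, Finset.mul_sum]
      exact Finset.sum_congr rfl fun ij _ => by
        rw [Finset.mul_sum]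
        exact Finset.sum_congr rfl fun kl _ => by ring
    have hfeq : f = fun c => ∑ ij : Fin (m+1) × Fin (m+1), ∑ kl : Fin (m+1) × Fin (m+1),
        (c ij * c kl) * ∫ x in K, φ x * (b ij x * b kl x) := by
      funext c
      rw [hfdef]
      simp only [hsqφ]
      rw [integral_finset_sum _ (fun ij _ => integrable_finset_sum _ (fun kl _ =>
        hint (fun x => c ij * c kl * (φ x * (b ij x * b kl x))) ((continuous_const.mul (hφc.mul ((hbc ij).mul (hbc kl))))) ))]
      refine Finset.sum_congr rfl fun ij _ => ?_
      rw [integral_finset_sum _ (fun kl _ =>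
        hint (fun x => c ij * c kl * (φ x * (b ij x * b kl x))) ((continuous_const.mul (hφc.mul ((hbc ij).mul (hbc kl))))) )]
      exact Finset.sum_congr rfl fun kl _ => integral_const_mul _ _
    rw [hfeq]
    exact continuous_finset_sum _ fun ij _ => continuous_finset_sum _ fun kl _ =>
      ((continuous_apply ij).mul (continuous_apply kl)).mul continuous_const
  -- nonnegativity
  have hg0 : ∀ c, 0 ≤ g c := fun c => setIntegral_nonneg hKm fun x _ => sq_nonneg _
  have hf0 : ∀ c, 0 ≤ f c := fun c => setIntegral_nonneg hKm fun x hx =>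
    mul_nonneg (hφ0 x hx) (sq_nonneg _)
  -- upper bound f ≤ 27 g
  have hf27 : ∀ c, f c ≤ 27 * g c := by
    intro c
    have h1 : f c ≤ ∫ x in K, 27 * (F c x)^2 := by
      refine setIntegral_mono_on (hint _ (hφc.mul ((hFc c).pow 2)))
        (hint _ (continuous_const.mul ((hFc c).pow 2))) hKm ?_
      intro x hx
      exact mul_le_mul_of_nonneg_right (hφ27 x hx) (sq_nonneg _)
    rwa [integral_const_mul] at h1
  -- homogeneity
  have hFsmul : ∀ (r : ℝ) c x, F (r • c) x = r * F c x := by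
    intro r c x
    rw [hFb, hFb]
    simp only [Pi.smul_apply, smul_eq_mul, Finset.mul_sum]
    exact Finset.sum_congr rfl fun ij _ => by ring
  have hgsmul : ∀ (r : ℝ) c, g (r • c) = r^2 * g c := by
    intro r c
    rw [hgdef]
    simp only [hFsmul, mul_pow]
    exact integral_const_mul _ _
  have hfsmul : ∀ (r : ℝ) c, f (r • c) = r^2 * f c := by
    intro r c
    rw [hfdef]
    simp only [hFsmul, mul_pow]
    rw [show (fun x => φ x * (r^2 * (F c x)^2)) = fun x => r^2 * (φ x * (F c x)^2) from
      funext fun x => by ring]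
    exact integral_const_mul _ _
  have hg00 : g 0 = 0 := by
    have := hgsmul 0 0
    rw [smul_zero] at this
    simpa using this
  have hf00 : f 0 = 0 := by
    have := hfsmul 0 0
    rw [smul_zero] at this
    simpa using this
  -- positivity of f on nonzero c
  have hfpos : ∀ c, c ≠ 0 → 0 < f c := by
    intro c hc
    rcases lt_or_eq_of_le (hf0 c) with h | h
    · exact h
    exfalso
    -- f c = 0, derive c = 0
    have hInt : IntegrableOn (fun x => φ x * (F c x)^2) K := hint _ (hφc.mul ((hFc c).pow 2))
    have hae : (fun x => φ x * (F c x)^2) =ᵐ[volume.restrict K] 0 := by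
      refine (integral_eq_zero_iff_of_nonneg_ae ?_ hInt).1 h.symm
      refine (ae_restrict_iff' hKm).2 (Filter.Eventually.of_forall ?_)
      intro x hx
      exact mul_nonneg (hφ0 x hx) (sq_nonneg _)
    have hFzero : ∀ y ∈ interior K, F c y = 0 := by
      intro y hy
      by_contra hFy
      have hWopen : IsOpen ({x | φ x * (F c x)^2 ≠ 0} ∩ interior K) :=
        ((isOpen_compl_singleton.preimage (hφc.mul ((hFc c).pow 2)))).inter isOpen_interior
      have hyW : y ∈ {x | φ x * (F c x)^2 ≠ 0} ∩ interior K := by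
        refine ⟨?_, hy⟩
        simp only [Set.mem_setOf_eq]
        intro h0
        rcases mul_eq_zero.1 h0 with h1 | h1
        · exact absurd h1 (ne_of_gt (hφpos y hy))
        · exact hFy (pow_eq_zero_iff (n := 2) (by norm_num) |>.1 h1)
      have hWpos : 0 < volume ({x | φ x * (F c x)^2 ≠ 0} ∩ interior K) :=
        hWopen.measure_pos volume ⟨y, hyW⟩
      have hzero : volume.restrict K {x | φ x * (F c x)^2 ≠ 0} = 0 := by
        have := hae
        rw [Filter.EventuallyEq, ae_iff] at this
        simpa using this
      have hle : volume ({x | φ x * (F c x)^2 ≠ 0} ∩ interior K) ≤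
          volume.restrict K {x | φ x * (F c x)^2 ≠ 0} := by
        rw [Measure.restrict_apply' hKm]
        exact measure_mono (Set.inter_subset_inter_right _ interior_subset)
      rw [hzero] at hle
      exact absurd (le_antisymm hle zero_le) (ne_of_gt hWpos)
    -- now use the polynomial injectivity
    apply hc
    obtain ⟨y₀, hy₀⟩ := hU
    set h2 : ℝ × ℝ → EuclideanSpace ℝ (Fin 2) :=
      fun st => (EuclideanSpace.equiv (Fin 2) ℝ).symm ![st.1, st.2] with hh2def
    have hh2c : Continuous h2 := by
      refine (EuclideanSpace.equiv (Fin 2) ℝ).symm.continuous.comp ?_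
      refine continuous_pi fun i => ?_
      fin_cases i
      · simpa using continuous_fst
      · simpa using continuous_snd
    have hh2app : ∀ s t : ℝ, (h2 (s, t)) 0 = s ∧ (h2 (s, t)) 1 = t := by
      intro s t
      constructor <;> rfl
    have hh2y : h2 (y₀ 0, y₀ 1) = y₀ := by
      apply PiLp.ext
      intro i
      fin_cases i <;> rfl
    have hpre : IsOpen (h2 ⁻¹' interior K) := isOpen_interior.preimage hh2c
    have hmem : (y₀ 0, y₀ 1) ∈ h2 ⁻¹' interior K := by
      simp only [Set.mem_preimage, hh2y]
      exact hy₀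
    obtain ⟨δ, hδ, hball⟩ := Metric.isOpen_iff.1 hpre _ hmem
    funext ij
    refine aux_two_var c (s₀ := y₀ 0) (t₀ := y₀ 1) hδ ?_ ij
    intro s hs t ht
    have hin : (s, t) ∈ Metric.ball (y₀ 0, y₀ 1) δ := by
      rw [Metric.mem_ball, Prod.dist_eq]
      simp only [Real.dist_eq]
      rw [max_lt_iff]
      constructor
      · rw [abs_sub_lt_iff]; constructor <;> [linarith [hs.1, hs.2]; linarith [hs.1, hs.2]]
      · rw [abs_sub_lt_iff]; constructor <;> [linarith [ht.1, ht.2]; linarith [ht.1, ht.2]]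
    have hFz := hFzero (h2 (s, t)) (hball hin)
    rw [hFdef] at hFz
    simp only [(hh2app s t).1, (hh2app s t).2] at hFz
    exact hFz
  -- compactness on the sphere
  have hsne : (Metric.sphere (0 : Fin (m+1) × Fin (m+1) → ℝ) 1).Nonempty := by
    refine NormedSpace.sphere_nonempty.2 (by norm_num)
  have hscomp : IsCompact (Metric.sphere (0 : Fin (m+1) × Fin (m+1) → ℝ) 1) :=
    isCompact_sphere _ _
  obtain ⟨c₀, hc₀S, hc₀min⟩ := hscomp.exists_isMinOn hsne hfcont.continuousOn
  obtain ⟨c₁, hc₁S, hc₁max⟩ := hscomp.exists_isMaxOn hsne hgcont.continuousOn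
  have hc₀ne : c₀ ≠ 0 := by
    intro h0
    rw [h0] at hc₀S
    simp at hc₀S
  have hfc₀ : 0 < f c₀ := hfpos c₀ hc₀ne
  have hgc₁ : 0 ≤ g c₁ := hg0 c₁
  set R : ℝ := g c₁ / f c₀ with hRdef
  have hR0 : 0 ≤ R := div_nonneg hgc₁ (le_of_lt hfc₀)
  have key : ∀ c, g c ≤ R * f c := by
    intro c
    by_cases hc : c = 0
    · rw [hc, hg00, hf00, mul_zero]
    · have hnc : (0:ℝ) < ‖c‖ := norm_pos_iff.2 hc
      set chat := ‖c‖⁻¹ • c with hchatdef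
      have hchatS : chat ∈ Metric.sphere (0 : Fin (m+1) × Fin (m+1) → ℝ) 1 := by
        simp only [mem_sphere_iff_norm, sub_zero, hchatdef, norm_smul, norm_inv, norm_norm]
        field_simp
      have hceq : c = ‖c‖ • chat := by
        rw [hchatdef, smul_smul, mul_inv_cancel₀ (ne_of_gt hnc), one_smul]
      have h1 : g c = ‖c‖^2 * g chat := by
        conv_lhs => rw [hceq]
        rw [hgsmul]
      have h2' : f c = ‖c‖^2 * f chat := by
        conv_lhs => rw [hceq]
        rw [hfsmul]
      have h3 : g chat ≤ g c₁ := hc₁max hchatS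
      have h4 : f c₀ ≤ f chat := hc₀min hchatS
      calc g c = ‖c‖^2 * g chat := h1
        _ ≤ ‖c‖^2 * g c₁ := by nlinarith
        _ = R * (‖c‖^2 * f c₀) := by rw [hRdef]; field_simp
        _ ≤ R * (‖c‖^2 * f chat) :=
          mul_le_mul_of_nonneg_left (mul_le_mul_of_nonneg_left h4 (sq_nonneg _)) hR0
        _ = R * f c := by rw [h2']
  -- assemble
  refine ⟨max R 27 + 1, by positivity, ?_⟩
  intro c
  have hCR : R ≤ max R 27 + 1 := le_trans (le_max_left _ _) (by linarith)
  have hC27 : (27:ℝ) ≤ max R 27 + 1 := le_trans (le_max_right _ _) (by linarith)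
  have hCpos : (0:ℝ) < max R 27 + 1 := by positivity
  constructor
  · rw [inv_mul_le_iff₀ hCpos]
    calc g c ≤ R * f c := key c
      _ ≤ (max R 27 + 1) * f c := mul_le_mul_of_nonneg_right hCR (hf0 c)
  · calc f c ≤ 27 * g c := hf27 c
      _ ≤ (max R 27 + 1) * g c := mul_le_mul_of_nonneg_right hC27 (hg0 c)



/-- L² norm equivalence with the interior bubble weight on
    polynomials of degree at most `m` on a nondegenerate triangle `K`. -/
theorem stmt_7
    (v₁ v₂ v₃ : EuclideanSpace ℝ (Fin 2))
    (hnd : AffineIndependent ℝ ![v₁, v₂, v₃])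
    (L₁ L₂ L₃ : EuclideanSpace ℝ (Fin 2) →ᵃ[ℝ] ℝ)
    (hsum : ∀ x, L₁ x + L₂ x + L₃ x = 1)
    (h11 : L₁ v₁ = 1) (h12 : L₁ v₂ = 0) (h13 : L₁ v₃ = 0)
    (h21 : L₂ v₁ = 0) (h22 : L₂ v₂ = 1) (h23 : L₂ v₃ = 0)
    (h31 : L₃ v₁ = 0) (h32 : L₃ v₂ = 0) (h33 : L₃ v₃ = 1)
    (K : Set (EuclideanSpace ℝ (Fin 2)))
    (hK : K = convexHull ℝ {v₁, v₂, v₃})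
    (φ : EuclideanSpace ℝ (Fin 2) → ℝ)
    (hφ : ∀ x, φ x = 27 * L₁ x * L₂ x * L₃ x)
    (m : ℕ) :
    ∃ C : ℝ, 0 < C ∧ ∀ p : MvPolynomial (Fin 2) ℝ, p.totalDegree ≤ m →
      C⁻¹ * (∫ x in K, (MvPolynomial.eval (fun i => x i) p) ^ 2) ≤
        (∫ x in K, φ x * (MvPolynomial.eval (fun i => x i) p) ^ 2) ∧
      (∫ x in K, φ x * (MvPolynomial.eval (fun i => x i) p) ^ 2) ≤
        C * (∫ x in K, (MvPolynomial.eval (fun i => x i) p) ^ 2) := by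
  have hfin : ({v₁, v₂, v₃} : Set (EuclideanSpace ℝ (Fin 2))).Finite := by
    exact (Set.finite_singleton v₃).insert v₂ |>.insert v₁
  have hKc : IsCompact K := hK ▸ hfin.isCompact_convexHull (𝕜 := ℝ)
  -- nonempty interior
  have hrange : Set.range ![v₁, v₂, v₃] = ({v₁, v₂, v₃} : Set (EuclideanSpace ℝ (Fin 2))) := by
    ext z
    constructor
    · rintro ⟨i, rfl⟩
      fin_cases i <;> simp [Set.mem_insert_iff]
    · intro hz
      rcases hz with rfl | rfl | rfl
      · exact ⟨0, rfl⟩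
      · exact ⟨1, rfl⟩
      · exact ⟨2, rfl⟩
  have hspan : affineSpan ℝ ({v₁, v₂, v₃} : Set (EuclideanSpace ℝ (Fin 2))) = ⊤ := by
    rw [← hrange, hnd.affineSpan_eq_top_iff_card_eq_finrank_add_one]
    simp [finrank_euclideanSpace_fin]
  have hU : (interior K).Nonempty := by
    rw [hK, (convex_convexHull ℝ _).interior_nonempty_iff_affineSpan_eq_top,
      affineSpan_convexHull]
    exact hspan
  -- continuity of φ
  have hL1c : Continuous L₁ := L₁.continuous_of_finiteDimensional
  have hL2c : Continuous L₂ := L₂.continuous_of_finiteDimensional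
  have hL3c : Continuous L₃ := L₃.continuous_of_finiteDimensional
  have hφc : Continuous φ := by
    rw [show φ = fun x => 27 * L₁ x * L₂ x * L₃ x from funext hφ]
    exact ((continuous_const.mul hL1c).mul hL2c).mul hL3c
  -- nonnegativity of barycentric coordinates on K
  have key : ∀ L : EuclideanSpace ℝ (Fin 2) →ᵃ[ℝ] ℝ,
      0 ≤ L v₁ → 0 ≤ L v₂ → 0 ≤ L v₃ → ∀ x ∈ K, 0 ≤ L x := by
    intro L hv1 hv2 hv3 x hx
    rw [hK] at hx
    have hconv : Convex ℝ (L ⁻¹' Set.Ici 0) := (convex_Ici (0:ℝ)).affine_preimage L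
    have hsub : ({v₁, v₂, v₃} : Set (EuclideanSpace ℝ (Fin 2))) ⊆ L ⁻¹' Set.Ici 0 := by
      intro z hz
      rcases hz with rfl | rfl | rfl <;> simpa [Set.mem_preimage]
    exact convexHull_min hsub hconv hx
  have hL10 : ∀ x ∈ K, 0 ≤ L₁ x := key L₁ (by rw [h11]; norm_num) (by rw [h12]) (by rw [h13])
  have hL20 : ∀ x ∈ K, 0 ≤ L₂ x := key L₂ (by rw [h21]) (by rw [h22]; norm_num) (by rw [h23])
  have hL30 : ∀ x ∈ K, 0 ≤ L₃ x := key L₃ (by rw [h31]) (by rw [h32]) (by rw [h33]; norm_num)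
  have hφ0K : ∀ x ∈ K, 0 ≤ φ x := by
    intro x hx
    rw [hφ]
    have a1 := hL10 x hx; have a2 := hL20 x hx; have a3 := hL30 x hx
    positivity
  have hφ27K : ∀ x ∈ K, φ x ≤ 27 := by
    intro x hx
    rw [hφ]
    have a1 := hL10 x hx; have a2 := hL20 x hx; have a3 := hL30 x hx
    have hs := hsum x
    nlinarith [mul_nonneg a1 a2, mul_nonneg a2 a3, mul_nonneg a1 a3,
      mul_nonneg (mul_nonneg a1 a2) a3]
  -- positivity in the interior
  have keypos : ∀ (L : EuclideanSpace ℝ (Fin 2) →ᵃ[ℝ] ℝ) (u : EuclideanSpace ℝ (Fin 2)),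
      L.linear u = 1 → (∀ x ∈ K, 0 ≤ L x) → ∀ x ∈ interior K, 0 < L x := by
    intro L u hu hL0 x hx
    have hun : u ≠ 0 := by
      intro h0
      rw [h0, map_zero] at hu
      exact one_ne_zero hu.symm
    have hnu : (0:ℝ) < ‖u‖ := norm_pos_iff.2 hun
    obtain ⟨ε, hε, hball⟩ := Metric.isOpen_iff.1 isOpen_interior x hx
    set t : ℝ := -(ε / (2 * ‖u‖)) with htdef
    have htneg : t < 0 := by
      rw [htdef]
      have : 0 < ε / (2 * ‖u‖) := by positivity
      linarith
    have hx' : t • u + x ∈ K := by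
      apply interior_subset
      apply hball
      rw [Metric.mem_ball, dist_eq_norm, add_sub_cancel_right, norm_smul,
        Real.norm_eq_abs, abs_of_neg htneg, htdef, neg_neg]
      have heq : ε / (2 * ‖u‖) * ‖u‖ = ε / 2 := by
        field_simp
      rw [heq]
      linarith
    have hLval : L (t • u + x) = t + L x := by
      have h0 : L (t • u +ᵥ x) = L.linear (t • u) +ᵥ L x := L.map_vadd x (t • u)
      simpa [_root_.map_smul, hu, smul_eq_mul] using h0
    have := hL0 _ hx'
    rw [hLval] at this
    linarith
  have hvsub : ∀ (L : EuclideanSpace ℝ (Fin 2) →ᵃ[ℝ] ℝ) (p q : EuclideanSpace ℝ (Fin 2)),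
      L.linear (p - q) = L p - L q := by
    intro L p q
    have := L.linearMap_vsub p q
    simpa [vsub_eq_sub] using this
  have hlin1 : L₁.linear (v₁ - v₂) = 1 := by rw [hvsub, h11, h12]; ring
  have hlin2 : L₂.linear (v₂ - v₁) = 1 := by rw [hvsub, h22, h21]; ring
  have hlin3 : L₃.linear (v₃ - v₁) = 1 := by rw [hvsub, h33, h31]; ring
  have hφposU : ∀ x ∈ interior K, 0 < φ x := by
    intro x hx
    rw [hφ]
    have p1 := keypos L₁ _ hlin1 hL10 x hx
    have p2 := keypos L₂ _ hlin2 hL20 x hx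
    have p3 := keypos L₃ _ hlin3 hL30 x hx
    positivity
  obtain ⟨C, hC, hmain⟩ := aux_core K hKc hU φ hφc hφ0K hφ27K hφposU m
  refine ⟨C, hC, ?_⟩
  intro p hp
  have hrepr := aux_repr m p hp
  simp only [hrepr]
  exact hmain (fun ij => MvPolynomial.coeff (Finsupp.equivFunOnFinite.symm ![(ij.1 : ℕ), (ij.2 : ℕ)]) p)
end

section
/- Let V be a real Hilbert space, a : V × V → ℝ bounded bilinear, g > 0, Γ₂ a measure space, γ : V → L²(Γ₂) a bounded linear (trace) map, f ∈ V*, and λ ∈ L^∞(Γ₂) with |λ| ≤ 1 a.e. Suppose u ∈ V satisfies a(u,v) + ∫_{Γ₂} g λ γ(v) ds = f(v) for all v ∈ V, and λ·γ(u) = |γ(u)| a.e. on Γ₂. Then u solves the variational inequality a(u, v - u) + j(v) - j(u) ≥ f(v - u) for all v ∈ V, where j(v) = ∫_{Γ₂} g|γ(v)| ds. -/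
open MeasureTheory

/-- the Lagrange multiplier formulation implies the
    variational inequality for the frictional contact problem. -/
theorem stmt_15 {V : Type*} [NormedAddCommGroup V] [InnerProductSpace ℝ V]
    {Ω : Type*} [MeasurableSpace Ω] (μ : Measure Ω) [IsFiniteMeasure μ]
    (a : V → V → ℝ)
    (ha_bilin₁ : ∀ w, IsLinearMap ℝ (fun v => a v w))
    (ha_bilin₂ : ∀ w, IsLinearMap ℝ (a w))
    (ha_bdd : ∃ M : ℝ, ∀ u v, |a u v| ≤ M * ‖u‖ * ‖v‖)
    (g : ℝ) (hg : 0 < g)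
    (γ : V →ₗ[ℝ] (Ω → ℝ))
    (hγ_meas : ∀ v, MemLp (γ v) 2 μ)
    (hγ_bdd : ∃ C : ℝ, ∀ v, (∫ x, (γ v x) ^ 2 ∂μ) ≤ C * ‖v‖ ^ 2)
    (f : V →L[ℝ] ℝ)
    (lam : Ω → ℝ) (hlam_meas : Measurable lam)
    (hlam_bdd : ∀ᵐ x ∂μ, |lam x| ≤ 1)
    (u : V)
    (heq : ∀ v : V, a u v + ∫ x, g * lam x * γ v x ∂μ = f v)
    (hcomp : ∀ᵐ x ∂μ, lam x * γ u x = |γ u x|) :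
    ∀ v : V, a u (v - u) + (∫ x, g * |γ v x| ∂μ) - (∫ x, g * |γ u x| ∂μ)
      ≥ f (v - u) := by
  -- integrability facts
  have hint : ∀ v, Integrable (γ v) μ := fun v =>
    (hγ_meas v).integrable (by norm_num)
  have hI : ∀ v, Integrable (fun x => g * lam x * γ v x) μ := by
    intro v
    have h1 : Integrable (fun x => lam x * γ v x) μ := by
      apply Integrable.bdd_mul (hint v) hlam_meas.aestronglyMeasurable
        (c := 1)
      filter_upwards [hlam_bdd] with x hx
      simpa using hx
    simpa [mul_assoc] using h1.const_mul g
  have hIa : ∀ v, Integrable (fun x => g * |γ v x|) μ := fun v =>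
    ((hint v).abs.const_mul g)
  intro v
  -- key identity from heq at (v - u)
  have hkey := heq (v - u)
  have hγsub : ∀ x, γ (v - u) x = γ v x - γ u x := by
    intro x; rw [map_sub]; rfl
  have hsplit : (∫ x, g * lam x * γ (v - u) x ∂μ)
      = (∫ x, g * lam x * γ v x ∂μ) - ∫ x, g * lam x * γ u x ∂μ := by
    rw [← integral_sub (hI v) (hI u)]
    apply integral_congr_ae
    filter_upwards with x
    rw [hγsub]; ring
  have hueq : (∫ x, g * lam x * γ u x ∂μ) = ∫ x, g * |γ u x| ∂μ := by
    apply integral_congr_ae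
    filter_upwards [hcomp] with x hx
    rw [mul_assoc, hx]
  have hvle : (∫ x, g * lam x * γ v x ∂μ) ≤ ∫ x, g * |γ v x| ∂μ := by
    apply integral_mono_ae (hI v) (hIa v)
    filter_upwards [hlam_bdd] with x hx
    have : lam x * γ v x ≤ |γ v x| := by
      calc lam x * γ v x ≤ |lam x * γ v x| := le_abs_self _
        _ = |lam x| * |γ v x| := abs_mul _ _
        _ ≤ 1 * |γ v x| := by
            apply mul_le_mul_of_nonneg_right hx (abs_nonneg _)
        _ = |γ v x| := one_mul _
    rw [mul_assoc]
    exact mul_le_mul_of_nonneg_left this hg.le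
  rw [hsplit, hueq] at hkey
  linarith
end
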